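/- Let l ≥ 4 and (p₁, …, p_l) be as in the context. For every integer n with 0 ≤ n ≤ N₀, one has Δ(n) ≥ 1 if and only if n ∈ G, where G = {Σᵢ xᵢ·(P/pᵢ) : x₁, …, x_l ∈ ℕ} is the numerical semigroup generated by the numbers P/pᵢ (i = 1, …, l), containing 0. -/

import Mathlib

theorem stmt_10 (l : ℕ) (hl : 4 ≤ l) (p : Fin l → ℕ)
    (hp1 : ∀ i, 1 < p i) (hmono : StrictMono p)
    (hcop : ∀ i j, i ≠ j → Nat.Coprime (p i) (p j))
    (e0 : ℤ) (p' : Fin l → ℕ) (hp' : ∀ i, p' i ≤ p i - 1)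
    (heq : e0 * ∏ i, (p i : ℤ)
      + ∑ i, (∏ j ∈ Finset.univ.erase i, (p j : ℤ)) * (p' i : ℤ) = -1)
    (Δ : ℕ → ℤ)
    (hΔ : ∀ n : ℕ, Δ n = 1 + |e0| * n - ∑ i, ⌈(n * p' i : ℚ) / p i⌉)
    (N0 : ℕ)
    (hN0 : (N0 : ℤ) = ((l : ℤ) - 2) * ∏ i, (p i : ℤ)
      - ∑ i, ∏ j ∈ Finset.univ.erase i, (p j : ℤ)) :
    ∀ n : ℕ, n ≤ N0 →
      (1 ≤ Δ n ↔ ∃ x : Fin l → ℕ, n = ∑ i, x i * ∏ j ∈ Finset.univ.erase i, p j) := by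
  intro n _hn
  set Q : ℤ := ∏ i, (p i : ℤ) with hQ
  set Pp : Fin l → ℤ := fun i => ∏ j ∈ Finset.univ.erase i, (p j : ℤ) with hPp
  have hpipos : ∀ i, (0 : ℤ) < (p i : ℤ) := by
    intro i; exact_mod_cast Nat.lt_of_lt_of_le Nat.zero_lt_one (hp1 i).le
  have hPppos : ∀ i, 0 < Pp i := by
    intro i; exact Finset.prod_pos fun j _ => hpipos j
  have hQi : ∀ i, (p i : ℤ) * Pp i = Q :=
    fun i => Finset.mul_prod_erase Finset.univ (fun j => (p j : ℤ)) (Finset.mem_univ i)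
  have hQpos : 0 < Q := Finset.prod_pos fun i _ => hpipos i
  -- key divisibility: p i ∣ Pp i * p' i + 1
  have hdvd1 : ∀ i, (p i : ℤ) ∣ Pp i * (p' i : ℤ) + 1 := by
    intro i
    have hsplit := Finset.sum_erase_add Finset.univ
      (fun j => Pp j * (p' j : ℤ)) (Finset.mem_univ i)
    have h1 : Pp i * (p' i : ℤ) + 1
        = -(e0 * Q) - ∑ j ∈ Finset.univ.erase i, Pp j * (p' j : ℤ) := by
      linarith [heq, hsplit]
    rw [h1]
    apply dvd_sub
    · have hq : (p i : ℤ) ∣ Q := ⟨Pp i, (hQi i).symm⟩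
      exact dvd_neg.mpr (hq.mul_left e0)
    · apply Finset.dvd_sum
      intro j hj
      have hji : i ∈ Finset.univ.erase j := by
        simp only [Finset.mem_erase, Finset.mem_univ, and_true] at hj ⊢
        exact fun h => hj (h.symm)
      exact ((Finset.dvd_prod_of_mem (fun j' => ((p j' : ℤ))) hji).mul_right _)
  have hdvdPp : ∀ i j, i ≠ j → (p i : ℤ) ∣ Pp j := by
    intro i j hij
    exact Finset.dvd_prod_of_mem _ (by simp [Finset.mem_erase, hij])
  -- x0
  set x0 : Fin l → ℤ := fun i => (-((n : ℤ) * (p' i : ℤ))) % (p i : ℤ) with hx0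
  have hx0nonneg : ∀ i, 0 ≤ x0 i := fun i => Int.emod_nonneg _ (hpipos i).ne'
  have hx0lt : ∀ i, x0 i < (p i : ℤ) := fun i => Int.emod_lt_of_pos _ (hpipos i)
  have hx0dvd : ∀ i, (p i : ℤ) ∣ ((n : ℤ) * (p' i : ℤ) + x0 i) := by
    intro i
    have h := Int.emod_emod_of_dvd (-((n : ℤ) * (p' i : ℤ))) (dvd_refl (p i : ℤ))
    have : ((n : ℤ) * (p' i : ℤ) + x0 i) % (p i : ℤ) = 0 := by
      rw [hx0]
      rw [Int.add_emod, h, ← Int.add_emod]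
      simp
    exact Int.dvd_of_emod_eq_zero this
  set c : Fin l → ℤ := fun i => ((n : ℤ) * (p' i : ℤ) + x0 i) / (p i : ℤ) with hcdef
  have hc : ∀ i, (p i : ℤ) * c i = (n : ℤ) * (p' i : ℤ) + x0 i := by
    intro i; exact Int.mul_ediv_cancel' (hx0dvd i)
  have hceil : ∀ i, ⌈((n : ℚ) * (p' i : ℚ)) / (p i : ℚ)⌉ = c i := by
    intro i
    have hpq : (0 : ℚ) < (p i : ℚ) := by exact_mod_cast hpipos i
    have hcq : ((p i : ℚ)) * ((c i : ℤ) : ℚ) = (n : ℚ) * (p' i : ℚ) + ((x0 i : ℤ) : ℚ) := by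
      exact_mod_cast congrArg (fun z : ℤ => (z : ℚ)) (hc i)
    have hx0q1 : (0 : ℚ) ≤ ((x0 i : ℤ) : ℚ) := by exact_mod_cast hx0nonneg i
    have hx0q2 : ((x0 i : ℤ) : ℚ) < (p i : ℚ) := by exact_mod_cast hx0lt i
    rw [Int.ceil_eq_iff]
    constructor
    · exact (lt_div_iff₀ hpq).mpr (by nlinarith)
    · exact (div_le_iff₀ hpq).mpr (by nlinarith)
  -- S and k
  set S : ℤ := ∑ i, Pp i * x0 i with hS
  set k : ℤ := (∑ i, c i) + (n : ℤ) * e0 with hk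
  have hQk : Q * k = S - (n : ℤ) := by
    have h1 : Q * (∑ i, c i) = ∑ i, Pp i * ((n : ℤ) * (p' i : ℤ) + x0 i) := by
      rw [Finset.mul_sum]
      exact Finset.sum_congr rfl fun i _ => by rw [← hc i, ← hQi i]; ring
    have h2 : ∑ i, Pp i * ((n : ℤ) * (p' i : ℤ) + x0 i)
        = (n : ℤ) * (∑ i, Pp i * (p' i : ℤ)) + S := by
      rw [Finset.mul_sum, ← Finset.sum_add_distrib]
      exact Finset.sum_congr rfl fun i _ => by ring
    have h3 : (∑ i, Pp i * (p' i : ℤ)) = -1 - e0 * Q := by linarith [heq]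
    rw [hk, mul_add, h1, h2, h3]; ring
  have he0 : e0 < 0 := by
    by_contra h
    push_neg at h
    have h4 : 0 ≤ ∑ i, Pp i * (p' i : ℤ) :=
      Finset.sum_nonneg fun i _ => mul_nonneg (hPppos i).le (by positivity)
    nlinarith [heq]
  have habs : |e0| = -e0 := abs_of_neg he0
  have hΔn : Δ n = 1 - k := by
    rw [hΔ n, habs]
    simp only [hceil]
    rw [hk]; ring
  constructor
  · -- Δ n ≥ 1 → exists representation
    intro h1
    have hk0 : k ≤ 0 := by linarith [hΔn]
    have hmk : ((-k).toNat : ℤ) = -k := Int.toNat_of_nonneg (by linarith)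
    have hl0 : 0 < l := by omega
    set i0 : Fin l := ⟨0, hl0⟩ with hi0
    refine ⟨fun i => (x0 i).toNat + (if i = i0 then (-k).toNat * p i else 0), ?_⟩
    have key : ∑ i, ((((x0 i).toNat + (if i = i0 then (-k).toNat * p i else 0) : ℕ)) : ℤ)
        * Pp i = (n : ℤ) := by
      have hterm : ∀ i : Fin l,
          ((((x0 i).toNat + (if i = i0 then (-k).toNat * p i else 0) : ℕ)) : ℤ) * Pp i
          = Pp i * x0 i + (if i = i0 then ((-k).toNat : ℤ) * ((p i : ℤ) * Pp i) else 0) := by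
        intro i
        push_cast
        rw [Int.toNat_of_nonneg (hx0nonneg i)]
        split <;> ring
      rw [Finset.sum_congr rfl fun i _ => hterm i, Finset.sum_add_distrib]
      rw [Finset.sum_ite_eq' Finset.univ i0
        (fun i => ((-k).toNat : ℤ) * ((p i : ℤ) * Pp i))]
      simp only [Finset.mem_univ, if_true]
      rw [hQi i0, hmk, ← hS]
      linarith [hQk]
    have hfin : (n : ℤ) = ((∑ i, ((x0 i).toNat + (if i = i0 then (-k).toNat * p i else 0))
        * ∏ j ∈ Finset.univ.erase i, p j : ℕ) : ℤ) := by
      rw [← key]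
      push_cast
      rfl
    exact_mod_cast hfin
  · -- representation → Δ n ≥ 1
    rintro ⟨x, hx⟩
    have hnz : (n : ℤ) = ∑ i, (x i : ℤ) * Pp i := by
      rw [hx]; push_cast; rfl
    have hge : ∀ i, x0 i ≤ (x i : ℤ) := by
      intro i
      by_contra h
      push_neg at h
      have hsplit : (n : ℤ) = (x i : ℤ) * Pp i
          + ∑ j ∈ Finset.univ.erase i, (x j : ℤ) * Pp j := by
        rw [hnz]
        exact (Finset.add_sum_erase Finset.univ (fun j => (x j : ℤ) * Pp j)
          (Finset.mem_univ i)).symm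
      have e1 : x0 i - (x i : ℤ) = ((n : ℤ) * (p' i : ℤ) + x0 i)
          - ((x i : ℤ) * (Pp i * (p' i : ℤ) + 1))
          - (p' i : ℤ) * ∑ j ∈ Finset.univ.erase i, (x j : ℤ) * Pp j := by
        rw [hsplit]; ring
      have hd : (p i : ℤ) ∣ x0 i - (x i : ℤ) := by
        rw [e1]
        apply dvd_sub
        apply dvd_sub
        · exact hx0dvd i
        · exact (hdvd1 i).mul_left _
        · apply Dvd.dvd.mul_left
          apply Finset.dvd_sum
          intro j hj
          have hij : i ≠ j := by
            simp only [Finset.mem_erase, Finset.mem_univ, and_true] at hj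
            exact fun hh => hj hh.symm
          exact (hdvdPp i j hij).mul_left _
      have hpos : 0 < x0 i - (x i : ℤ) := by
        have : (0 : ℤ) ≤ (x i : ℤ) := Int.ofNat_nonneg _
        omega
      have hle := Int.le_of_dvd hpos hd
      have := hx0lt i
      have : (0 : ℤ) ≤ (x i : ℤ) := Int.ofNat_nonneg _
      omega
    have hSle : S ≤ (n : ℤ) := by
      rw [hnz, hS]
      apply Finset.sum_le_sum
      intro i _
      calc Pp i * x0 i ≤ Pp i * (x i : ℤ) :=
            mul_le_mul_of_nonneg_left (hge i) (hPppos i).le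
        _ = (x i : ℤ) * Pp i := by ring
    have hk0 : k ≤ 0 := by nlinarith [hQk, hQpos, hSle]
    rw [hΔn]; linarith
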